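/- Let ψ : ℝⁿ ⇉ ℝⁿ satisfy the (Γ₁)-condition and V : ℝⁿ → ℝⁿ be L-Lipschitz continuous and η-strongly monotone. Let μ > 0 and ρ > 0 satisfy ‖P_{ψ(r)}(y) − P_{ψ(s)}(y)‖ ≤ ρ‖r − s‖ for all y, r, s ∈ ℝⁿ, assume θ := η − ρ − 1/2 − L²/2 − μ²/2 + μη > 0 and √(L² − 2ημ + μ²) + ρ < μ, and set θ₁ := θ/(2L + ρ + μ)². Let σ, τ : [0, ∞) → (0, ∞) be given functions, let x* be the unique solution of the inverse quasi-variational inequality problem, and let x : [0, ∞) → ℝⁿ be twice differentiable and satisfy ẍ(t) + σ(t)ẋ(t) + τ(t)(V(x(t)) − P_{ψ(x(t))}(V(x(t)) − μx(t))) = 0 for all t ≥ 0. Then the function k(t) := (1/2)‖x(t) − x*‖² satisfies, for every t ≥ 0, k̈(t) + σ(t)k̇(t) + θ²θ₁τ(t) k(t) + (θ₁σ²(t)/(2τ(t)) − 1)‖ẋ(t)‖² + (θ₁σ(t)/(2τ(t))) · (d/dt)‖ẋ(t)‖² ≤ 0. -/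

import Mathlib

open scoped RealInnerProductSpace
open MeasureTheory

/- Metric projection onto a set `C ⊆ ℝⁿ`: when `C` is nonempty, closed and convex this is
the unique nearest point of `C`. -/
open Classical in
noncomputable def metricProj {d : ℕ} (C : Set (EuclideanSpace ℝ (Fin d)))
    (x : EuclideanSpace ℝ (Fin d)) : EuclideanSpace ℝ (Fin d) :=
  if h : ∃ y, y ∈ C ∧ ∀ z ∈ C, ‖x - y‖ ≤ ‖x - z‖ then h.choose else x

/-- Variational characterization of the metric projection. -/
lemma metricProj_spec {d : ℕ} {C : Set (EuclideanSpace ℝ (Fin d))}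
    (hne : C.Nonempty) (hcl : IsClosed C) (hconv : Convex ℝ C) (u : EuclideanSpace ℝ (Fin d)) :
    metricProj C u ∈ C ∧ ∀ z ∈ C, ⟪u - metricProj C u, z - metricProj C u⟫ ≤ 0 := by
  classical
  have hex : ∃ y, y ∈ C ∧ ∀ z ∈ C, ‖u - y‖ ≤ ‖u - z‖ := by
    obtain ⟨y, hyC, hyd⟩ := hcl.exists_infDist_eq_dist hne u
    refine ⟨y, hyC, fun z hz => ?_⟩
    rw [← dist_eq_norm, ← dist_eq_norm, ← hyd]
    exact Metric.infDist_le_dist_of_mem hz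
  rw [metricProj, dif_pos hex]
  obtain ⟨hmem, hmin⟩ := hex.choose_spec
  refine ⟨hmem, ?_⟩
  rw [← norm_eq_iInf_iff_real_inner_le_zero hconv hmem]
  haveI : Nonempty C := ⟨⟨_, hmem⟩⟩
  apply le_antisymm
  · exact le_ciInf fun w => hmin w w.2
  · exact ciInf_le ⟨0, fun _ ⟨w, h⟩ => h ▸ norm_nonneg _⟩ (⟨_, hmem⟩ : C)

/-- Any two points satisfying the variational characterization for data `u`, `w`
are at distance at most `‖u - w‖`. -/
lemma proj_char_dist {d : ℕ} {C : Set (EuclideanSpace ℝ (Fin d))}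
    {u w p q : EuclideanSpace ℝ (Fin d)}
    (hp : p ∈ C) (hq : q ∈ C)
    (hpc : ∀ z ∈ C, ⟪u - p, z - p⟫ ≤ 0) (hqc : ∀ z ∈ C, ⟪w - q, z - q⟫ ≤ 0) :
    ‖p - q‖ ≤ ‖u - w‖ := by
  have h1 := hpc q hq
  have h2 := hqc p hp
  have expand : ‖p - q‖ ^ 2 - ⟪u - w, p - q⟫ = ⟪u - p, q - p⟫ + ⟪w - q, p - q⟫ := by
    rw [← real_inner_self_eq_norm_sq]
    simp only [inner_sub_left, inner_sub_right]
    ring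
  have key : ‖p - q‖ ^ 2 ≤ ⟪u - w, p - q⟫ := by linarith
  have h3 := real_inner_le_norm (u - w) (p - q)
  nlinarith [norm_nonneg (p - q), norm_nonneg (u - w)]

/-- Derivatives at `t` agree for functions that agree on `[t, ∞)`. -/
lemma eq_deriv_of_eq_on_Ici {E : Type*} [NormedAddCommGroup E] [NormedSpace ℝ E]
    {f g : ℝ → E} {a b : E} {t : ℝ}
    (hfg : ∀ s, t ≤ s → f s = g s)
    (hf : HasDerivAt f a t) (hg : HasDerivAt g b t) : a = b := by
  have h1 : HasDerivWithinAt f a (Set.Ici t) t := hf.hasDerivWithinAt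
  have h2 : HasDerivWithinAt f b (Set.Ici t) t :=
    (hg.hasDerivWithinAt).congr (fun s hs => hfg s hs) (hfg t le_rfl)
  exact (uniqueDiffOn_Ici t t Set.self_mem_Ici).eq_deriv _ h1 h2

set_option maxHeartbeats 1000000 in
/-- Along a twice differentiable trajectory of the second-order dynamical
system, the function `k(t) = ½‖x(t) − x*‖²` satisfies, for all `t ≥ 0`,
`k̈ + σ(t) k̇ + θ²θ₁ τ(t) k + (θ₁σ(t)²/(2τ(t)) − 1)‖ẋ‖² + (θ₁σ(t)/(2τ(t))) (d/dt)‖ẋ‖² ≤ 0`.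
Here `x'` and `x''` are the first and second derivatives of `x`, `k' t` and `k'' t` are the
first and second derivatives of `k` and `w' t` is the derivative of `t ↦ ‖ẋ(t)‖²`. -/
theorem stmt_18 {d : ℕ} (ψ : EuclideanSpace ℝ (Fin d) → Set (EuclideanSpace ℝ (Fin d)))
    (V : EuclideanSpace ℝ (Fin d) → EuclideanSpace ℝ (Fin d)) (L η μ ρ θ θ₁ : ℝ)
    (hΓ₁ : ∀ x, (ψ x).Nonempty ∧ IsClosed (ψ x) ∧ Convex ℝ (ψ x))
    (hL : ∀ y z, ‖V y - V z‖ ≤ L * ‖y - z‖)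
    (hη : ∀ y z, η * ‖y - z‖ ^ 2 ≤ ⟪V y - V z, y - z⟫)
    (hμ : 0 < μ) (hρ : 0 < ρ)
    (hproj : ∀ y r s, ‖metricProj (ψ r) y - metricProj (ψ s) y‖ ≤ ρ * ‖r - s‖)
    (hθ : θ = η - ρ - 1/2 - L^2/2 - μ^2/2 + μ*η) (hθpos : 0 < θ)
    (hcond : Real.sqrt (L^2 - 2*η*μ + μ^2) + ρ < μ)
    (hθ₁ : θ₁ = θ / (2*L + ρ + μ)^2)
    (σ τ : ℝ → ℝ) (hσpos : ∀ t, 0 ≤ t → 0 < σ t) (hτpos : ∀ t, 0 ≤ t → 0 < τ t)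
    (xs : EuclideanSpace ℝ (Fin d))
    (hxs : V xs ∈ ψ xs ∧ ∀ z ∈ ψ xs, 0 ≤ ⟪xs, z - V xs⟫)
    (x x' x'' : ℝ → EuclideanSpace ℝ (Fin d))
    (hx' : ∀ t, 0 ≤ t → HasDerivAt x (x' t) t)
    (hx'' : ∀ t, 0 ≤ t → HasDerivAt x' (x'' t) t)
    (hode : ∀ t, 0 ≤ t →
      x'' t + σ t • x' t +
        τ t • (V (x t) - metricProj (ψ (x t)) (V (x t) - μ • x t)) = 0)
    (k k' k'' w' : ℝ → ℝ)
    (hk : ∀ t, k t = (1/2) * ‖x t - xs‖ ^ 2)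
    (hk' : ∀ t, 0 ≤ t → HasDerivAt k (k' t) t)
    (hk'' : ∀ t, 0 ≤ t → HasDerivAt k' (k'' t) t)
    (hw' : ∀ t, 0 ≤ t → HasDerivAt (fun s => ‖x' s‖ ^ 2) (w' t) t) :
    ∀ t, 0 ≤ t →
      k'' t + σ t * k' t + θ^2 * θ₁ * τ t * k t
        + (θ₁ * (σ t)^2 / (2 * τ t) - 1) * ‖x' t‖ ^ 2
        + (θ₁ * σ t / (2 * τ t)) * w' t ≤ 0 := by
  intro t ht
  -- derivative computations (valid in all cases)
  have hk'eq : ∀ s, 0 ≤ s → k' s = ⟪x' s, x s - xs⟫ := by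
    intro s hs
    have h1 : HasDerivAt (fun r => (1/2 : ℝ) * ⟪x r - xs, x r - xs⟫)
        ((1/2) * (⟪x s - xs, x' s⟫ + ⟪x' s, x s - xs⟫)) s :=
      ((((hx' s hs).sub_const xs).inner ℝ ((hx' s hs).sub_const xs)).const_mul _)
    have h2 : k = fun r => (1/2 : ℝ) * ⟪x r - xs, x r - xs⟫ :=
      funext fun r => by rw [hk r, real_inner_self_eq_norm_sq]
    have h3 := hk' s hs
    rw [h2] at h3
    have h4 := h3.unique h1
    rw [h4, real_inner_comm (x s - xs) (x' s)]
    ring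
  have hk''eq : k'' t = ⟪x' t, x' t⟫ + ⟪x'' t, x t - xs⟫ := by
    have hg : HasDerivAt (fun s => ⟪x' s, x s - xs⟫)
        (⟪x' t, x' t⟫ + ⟪x'' t, x t - xs⟫) t :=
      (hx'' t ht).inner ℝ ((hx' t ht).sub_const xs)
    exact eq_deriv_of_eq_on_Ici (fun s hs => hk'eq s (ht.trans hs)) (hk'' t ht) hg
  have hw'eq : w' t = ⟪x' t, x'' t⟫ + ⟪x'' t, x' t⟫ := by
    have hg : HasDerivAt (fun s => ⟪x' s, x' s⟫) (⟪x' t, x'' t⟫ + ⟪x'' t, x' t⟫) t :=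
      (hx'' t ht).inner ℝ (hx'' t ht)
    have h2 : (fun s => ‖x' s‖ ^ 2) = fun s => ⟪x' s, x' s⟫ :=
      funext fun s => (real_inner_self_eq_norm_sq _).symm
    have h3 := hw' t ht
    rw [h2] at h3
    exact h3.unique hg
  -- the driving field
  set Fx : EuclideanSpace ℝ (Fin d) :=
    V (x t) - metricProj (ψ (x t)) (V (x t) - μ • x t) with hFx
  have hx''eq : x'' t = -(σ t • x' t) - τ t • Fx := by
    have h := hode t ht
    rw [add_assoc, add_eq_zero_iff_eq_neg] at h
    rw [h]; module
  have hip1 : ⟪x'' t, x t - xs⟫ = -(σ t * ⟪x' t, x t - xs⟫) - τ t * ⟪Fx, x t - xs⟫ := by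
    rw [hx''eq, inner_sub_left, inner_neg_left, real_inner_smul_left, real_inner_smul_left]
  have hip2 : ⟪x'' t, x' t⟫ = -(σ t * ⟪x' t, x' t⟫) - τ t * ⟪Fx, x' t⟫ := by
    rw [hx''eq, inner_sub_left, inner_neg_left, real_inner_smul_left, real_inner_smul_left]
  have hip3 : ⟪x' t, x'' t⟫ = ⟪x'' t, x' t⟫ := real_inner_comm _ _
  have hb2 : ⟪x' t, x' t⟫ = ‖x' t‖ ^ 2 := real_inner_self_eq_norm_sq _
  rcases Nat.eq_zero_or_pos d with hd | hd
  · -- trivial case: the space is a single point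
    subst hd
    haveI : Subsingleton (EuclideanSpace ℝ (Fin 0)) :=
      ⟨fun a b => by ext i; exact i.elim0⟩
    have hz : ∀ v : EuclideanSpace ℝ (Fin 0), v = 0 := fun v => Subsingleton.elim v 0
    have ha : ‖x t - xs‖ = 0 := by rw [hz (x t - xs), norm_zero]
    have hbn : ‖x' t‖ = 0 := by rw [hz (x' t), norm_zero]
    have hPz : ⟪Fx, x t - xs⟫ = 0 := by rw [hz Fx, inner_zero_left]
    have hQz : ⟪Fx, x' t⟫ = 0 := by rw [hz Fx, inner_zero_left]
    have hRz : ⟪x' t, x t - xs⟫ = 0 := by rw [hz (x' t), inner_zero_left]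
    rw [hk''eq, hk'eq t ht, hw'eq, hip3, hip2, hip1, hb2, hk t, hPz, hQz, hRz, ha, hbn]
    ring_nf
    norm_num
  · -- main case
    have hηL : η ≤ L := by
      have hnv : ‖(EuclideanSpace.single (⟨0, hd⟩ : Fin d) (1 : ℝ))
          - (0 : EuclideanSpace ℝ (Fin d))‖ = 1 := by
        rw [sub_zero, EuclideanSpace.norm_single, norm_one]
      have h1 := hη (EuclideanSpace.single (⟨0, hd⟩ : Fin d) (1 : ℝ)) 0
      have h2 := real_inner_le_norm (V (EuclideanSpace.single (⟨0, hd⟩ : Fin d) (1 : ℝ)) - V 0)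
        ((EuclideanSpace.single (⟨0, hd⟩ : Fin d) (1 : ℝ)) - 0)
      have h3 := hL (EuclideanSpace.single (⟨0, hd⟩ : Fin d) (1 : ℝ)) 0
      rw [hnv] at h1 h2 h3
      nlinarith
    have hμη : μ * η ≤ μ * L := mul_le_mul_of_nonneg_left hηL hμ.le
    have hsqLμ : 0 ≤ L^2 - 2*L*μ + μ^2 := by nlinarith [sq_nonneg (L - μ)]
    have hL0 : 0 < L := by linarith
    have hKpos : 0 < 2*L + ρ + μ := by linarith
    have hθ₁K : θ₁ * (2*L + ρ + μ) ^ 2 = θ := by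
      rw [hθ₁]; field_simp
    have hθ₁nn : 0 ≤ θ₁ := by
      rw [hθ₁]; positivity
    have hθK : θ ≤ 2*L + ρ + μ := by linarith
    have hθθ₁ : θ * θ₁ ≤ 1 := by
      have h2 : (θ * θ₁) * (2*L + ρ + μ) ^ 2 ≤ 1 * (2*L + ρ + μ) ^ 2 := by
        have h1 : θ ^ 2 ≤ (2*L + ρ + μ) ^ 2 := pow_le_pow_left₀ hθpos.le hθK 2
        have h3 : (θ * θ₁) * (2*L + ρ + μ) ^ 2 = θ ^ 2 := by
          rw [mul_assoc, hθ₁K]; ring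
        rw [h3, one_mul]; exact h1
      exact le_of_mul_le_mul_right h2 (by positivity)
    -- projection properties
    obtain ⟨hne1, hcl1, hcv1⟩ := hΓ₁ (x t)
    obtain ⟨hne2, hcl2, hcv2⟩ := hΓ₁ xs
    have hs1 := metricProj_spec hne1 hcl1 hcv1 (V (x t) - μ • x t)
    have hs2 := metricProj_spec hne1 hcl1 hcv1 (V xs - μ • xs)
    have hs3 := metricProj_spec hne2 hcl2 hcv2 (V xs - μ • xs)
    -- the solution is a fixed point
    have hPxs : metricProj (ψ xs) (V xs - μ • xs) = V xs := by
      have hchar : ∀ z ∈ ψ xs, ⟪(V xs - μ • xs) - V xs, z - V xs⟫ ≤ 0 := by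
        intro z hz
        have h0 : (V xs - μ • xs) - V xs = -(μ • xs) := by module
        rw [h0, inner_neg_left, real_inner_smul_left]
        have := hxs.2 z hz
        nlinarith
      have hdist := proj_char_dist hs3.1 hxs.1 hs3.2 hchar
      rw [sub_self, norm_zero] at hdist
      have h5 := le_antisymm hdist (norm_nonneg _)
      rwa [norm_eq_zero, sub_eq_zero] at h5
    -- nonexpansiveness in the argument + Lipschitz in the set
    have hnexp : ‖metricProj (ψ (x t)) (V (x t) - μ • x t)
        - metricProj (ψ (x t)) (V xs - μ • xs)‖
        ≤ ‖(V (x t) - V xs) - μ • (x t - xs)‖ := by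
      have h6 := proj_char_dist hs1.1 hs2.1 hs1.2 hs2.2
      have heq : (V (x t) - μ • x t) - (V xs - μ • xs)
          = (V (x t) - V xs) - μ • (x t - xs) := by module
      rwa [heq] at h6
    have hlip : ‖metricProj (ψ (x t)) (V xs - μ • xs)
        - metricProj (ψ xs) (V xs - μ • xs)‖ ≤ ρ * ‖x t - xs‖ :=
      hproj (V xs - μ • xs) (x t) xs
    have hg : ‖metricProj (ψ (x t)) (V (x t) - μ • x t) - V xs‖
        ≤ ‖(V (x t) - V xs) - μ • (x t - xs)‖ + ρ * ‖x t - xs‖ := by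
      calc ‖metricProj (ψ (x t)) (V (x t) - μ • x t) - V xs‖
          = ‖(metricProj (ψ (x t)) (V (x t) - μ • x t)
              - metricProj (ψ (x t)) (V xs - μ • xs))
            + (metricProj (ψ (x t)) (V xs - μ • xs) - metricProj (ψ xs) (V xs - μ • xs))‖ := by
            rw [hPxs]; congr 1; abel
        _ ≤ _ := (norm_add_le _ _).trans (add_le_add hnexp hlip)
    -- bound on ‖ΔV - μ•e‖²
    have hΔsq : ‖(V (x t) - V xs) - μ • (x t - xs)‖ ^ 2
        ≤ (L^2 - 2*η*μ + μ^2) * ‖x t - xs‖ ^ 2 := by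
      have h1 : ‖(V (x t) - V xs) - μ • (x t - xs)‖ ^ 2
          = ‖V (x t) - V xs‖ ^ 2 - 2 * ⟪V (x t) - V xs, μ • (x t - xs)⟫
            + ‖μ • (x t - xs)‖ ^ 2 := norm_sub_sq_real _ _
      have h2 : ⟪V (x t) - V xs, μ • (x t - xs)⟫ = μ * ⟪V (x t) - V xs, x t - xs⟫ := by
        rw [real_inner_comm, real_inner_smul_left, real_inner_comm]
      have h3 : ‖μ • (x t - xs)‖ = μ * ‖x t - xs‖ := by
        rw [norm_smul, Real.norm_eq_abs, abs_of_pos hμ]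
      have h4 := hη (x t) xs
      have h5 := hL (x t) xs
      have h6 : ‖V (x t) - V xs‖ ^ 2 ≤ L ^ 2 * ‖x t - xs‖ ^ 2 := by
        nlinarith [norm_nonneg (V (x t) - V xs), norm_nonneg (x t - xs)]
      rw [h1, h2, h3]
      nlinarith [mul_le_mul_of_nonneg_left h4 hμ.le]
    -- strong monotonicity of the field: ⟪Fx, e⟫ ≥ θ‖e‖²
    have hFe : θ * ‖x t - xs‖ ^ 2 ≤ ⟪Fx, x t - xs⟫ := by
      have hsplit : ⟪Fx, x t - xs⟫ = ⟪V (x t) - V xs, x t - xs⟫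
          - ⟪metricProj (ψ (x t)) (V (x t) - μ • x t) - V xs, x t - xs⟫ := by
        rw [← inner_sub_left]
        congr 1
        rw [hFx]; module
      have h1 := real_inner_le_norm
        (metricProj (ψ (x t)) (V (x t) - μ • x t) - V xs) (x t - xs)
      have h2 := mul_le_mul_of_nonneg_right hg (norm_nonneg (x t - xs))
      have h3 := hη (x t) xs
      rw [hsplit, hθ]
      nlinarith [sq_nonneg (‖(V (x t) - V xs) - μ • (x t - xs)‖ - ‖x t - xs‖),
        norm_nonneg ((V (x t) - V xs) - μ • (x t - xs)), norm_nonneg (x t - xs)]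
    -- Lipschitz bound on the field: ‖Fx‖ ≤ (2L+ρ+μ)‖e‖
    have hFn : ‖Fx‖ ≤ (2*L + ρ + μ) * ‖x t - xs‖ := by
      have hsplit : Fx = (V (x t) - V xs)
          - (metricProj (ψ (x t)) (V (x t) - μ • x t) - V xs) := by
        rw [hFx]; module
      have h1 : ‖Fx‖ ≤ ‖V (x t) - V xs‖
          + ‖metricProj (ψ (x t)) (V (x t) - μ • x t) - V xs‖ := by
        rw [hsplit]; exact norm_sub_le _ _
      have h2 : ‖(V (x t) - V xs) - μ • (x t - xs)‖ ≤ ‖V (x t) - V xs‖ + μ * ‖x t - xs‖ := by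
        have h7 := norm_sub_le (V (x t) - V xs) (μ • (x t - xs))
        rwa [norm_smul, Real.norm_eq_abs, abs_of_pos hμ] at h7
      have h3 := hL (x t) xs
      linarith
    -- assemble
    have hT := hτpos t ht
    have hS := hσpos t ht
    have hQ := abs_real_inner_le_norm Fx (x' t)
    rw [abs_le] at hQ
    have h2T : (0:ℝ) < 2 * τ t := by linarith
    refine le_of_mul_le_mul_left ?_ h2T
    rw [mul_zero]
    rw [hk''eq, hk'eq t ht, hw'eq, hip3, hip2, hip1, hb2, hk t]
    have hexp : 2 * τ t *
        (‖x' t‖ ^ 2 + (-(σ t * ⟪x' t, x t - xs⟫) - τ t * ⟪Fx, x t - xs⟫)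
          + σ t * ⟪x' t, x t - xs⟫ + θ ^ 2 * θ₁ * τ t * (1/2 * ‖x t - xs‖ ^ 2)
          + (θ₁ * σ t ^ 2 / (2 * τ t) - 1) * ‖x' t‖ ^ 2
          + θ₁ * σ t / (2 * τ t) *
            ((-(σ t * ‖x' t‖ ^ 2) - τ t * ⟪Fx, x' t⟫)
              + (-(σ t * ‖x' t‖ ^ 2) - τ t * ⟪Fx, x' t⟫)))
        = -(2 * (τ t)^2 * ⟪Fx, x t - xs⟫) + θ ^ 2 * θ₁ * (τ t)^2 * ‖x t - xs‖ ^ 2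
          - θ₁ * (σ t)^2 * ‖x' t‖ ^ 2 - 2 * θ₁ * σ t * τ t * ⟪Fx, x' t⟫ := by
      field_simp
      ring
    rw [hexp]
    -- prepared linear facts
    have f1 : (τ t)^2 * (θ * ‖x t - xs‖ ^ 2) ≤ (τ t)^2 * ⟪Fx, x t - xs⟫ :=
      mul_le_mul_of_nonneg_left hFe (sq_nonneg _)
    have f3 : 0 ≤ θ₁ * σ t * τ t * (‖Fx‖ * ‖x' t‖ + ⟪Fx, x' t⟫) :=
      mul_nonneg (mul_nonneg (mul_nonneg hθ₁nn hS.le) hT.le) (by linarith [hQ.1])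
    have f4 : 0 ≤ θ₁ * (σ t * ‖x' t‖ - τ t * ‖Fx‖)^2 :=
      mul_nonneg hθ₁nn (sq_nonneg _)
    have hc2 : ‖Fx‖ ^ 2 ≤ ((2*L + ρ + μ) * ‖x t - xs‖) ^ 2 :=
      pow_le_pow_left₀ (norm_nonneg _) hFn 2
    have f5 : θ₁ * (τ t)^2 * ‖Fx‖ ^ 2
        ≤ θ₁ * (τ t)^2 * (((2*L + ρ + μ) * ‖x t - xs‖) ^ 2) :=
      mul_le_mul_of_nonneg_left hc2 (mul_nonneg hθ₁nn (sq_nonneg _))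
    have f6 : θ₁ * (τ t)^2 * (((2*L + ρ + μ) * ‖x t - xs‖) ^ 2)
        = θ * ((τ t)^2 * ‖x t - xs‖ ^ 2) := by
      rw [← hθ₁K]; ring
    have f7 : θ ^ 2 * θ₁ * (τ t)^2 * ‖x t - xs‖ ^ 2 ≤ θ * ((τ t)^2 * ‖x t - xs‖ ^ 2) := by
      have h8 : (θ * θ₁) * (θ * ((τ t)^2 * ‖x t - xs‖ ^ 2))
          ≤ 1 * (θ * ((τ t)^2 * ‖x t - xs‖ ^ 2)) :=
        mul_le_mul_of_nonneg_right hθθ₁ (mul_nonneg hθpos.le (by positivity))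
      linarith [h8]
    linarith [f1, f3, f4, f5, f6, f7]
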